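/- arXiv:1907.10771 — 2 statements merged into one kernel-verified Lean document; each statement's English description precedes it below -/
import Mathlib

section
/- Let M be the star-with-loops transition matrix with parameters T ≥ 1 and w_C, w_S > 0, and D = w_C + T·w_S. Then M has real eigenvalues, and its multiset of eigenvalues is exactly: 1 with multiplicity one, 1/2 with multiplicity T − 1, and w_C/D − 1/2 with multiplicity one. In particular, every eigenvalue of M other than the simple eigenvalue 1 has absolute value at most 1/2. Moreover, the (T−1)-dimensional space of vectors that vanish on the center and whose satellite entries sum to 0 is an eigenspace of M for the eigenvalue 1/2. -/
open Matrix Finset BigOperators Kronecker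

noncomputable def eigs {α : Type*} [Fintype α] [DecidableEq α] (M : Matrix α α ℝ) : Multiset ℝ :=
  M.charpoly.roots

noncomputable def sortedEigs {α : Type*} [Fintype α] [DecidableEq α] (M : Matrix α α ℝ) : List ℝ :=
  (eigs M).sort (· ≤ ·)

noncomputable def secondEig {α : Type*} [Fintype α] [DecidableEq α] (M : Matrix α α ℝ) : ℝ :=
  (sortedEigs M).getD (Fintype.card α - 2) 0

noncomputable def minEig {α : Type*} [Fintype α] [DecidableEq α] (M : Matrix α α ℝ) : ℝ :=
  (sortedEigs M).getD 0 0

noncomputable def oneSidedGap {α : Type*} [Fintype α] [DecidableEq α] (M : Matrix α α ℝ) : ℝ :=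
  1 - secondEig M

noncomputable def twoSidedGap {α : Type*} [Fintype α] [DecidableEq α] (M : Matrix α α ℝ) : ℝ :=
  1 - max |secondEig M| |minEig M|

def RowStochastic {α : Type*} [Fintype α] (M : Matrix α α ℝ) : Prop :=
  (∀ i j, 0 ≤ M i j) ∧ ∀ i, ∑ j, M i j = 1

/-- The star-with-loops transition matrix with parameters T, w_C, w_S:
center is vertex 0, satellites are 1,…,T. -/
noncomputable def starM (T : ℕ) (wC wS : ℝ) : Matrix (Fin (T + 1)) (Fin (T + 1)) ℝ :=
  fun i j =>
    if i = 0 then (if j = 0 then wC / (wC + T * wS) else wS / (wC + T * wS))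
    else if j = 0 then 1 / 2
    else if i = j then 1 / 2
    else 0


section StarAux
open Polynomial

lemma slcast_ne_last {S : ℕ} (k : Fin S) : Fin.castSucc k ≠ Fin.last S :=
  (Fin.castSucc_lt_last k).ne

noncomputable def slDp (S : ℕ) : Matrix (Fin (S+1)) (Fin (S+1)) ℝ :=
  Matrix.of fun i j => if j = Fin.last S then 1 else
    (if i = j then (1:ℝ) else 0) - (if i = Fin.last S then 1 else 0)

noncomputable def slDq (S : ℕ) : Matrix (Fin (S+1)) (Fin (S+1)) ℝ :=
  Matrix.of fun i j => if i = Fin.last S then ((S:ℝ)+1)⁻¹ else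
    (if i = j then (1:ℝ) else 0) - ((S:ℝ)+1)⁻¹

noncomputable def slBp (S : ℕ) : Matrix (Fin 1) (Fin (S+1)) ℝ :=
  Matrix.of fun _ j => if j = Fin.last S then 1 else 0

noncomputable def slBq (S : ℕ) : Matrix (Fin 1) (Fin (S+1)) ℝ :=
  Matrix.of fun _ _ => -((S:ℝ)+1)⁻¹

noncomputable def slP (S : ℕ) : Matrix (Fin 1 ⊕ Fin (S+1)) (Fin 1 ⊕ Fin (S+1)) ℝ :=
  Matrix.fromBlocks 1 (slBp S) 0 (slDp S)
noncomputable def slQ (S : ℕ) : Matrix (Fin 1 ⊕ Fin (S+1)) (Fin 1 ⊕ Fin (S+1)) ℝ :=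
  Matrix.fromBlocks 1 (slBq S) 0 (slDq S)

noncomputable def slCu (S : ℕ) : Matrix (Fin (S+1)) (Fin 1) ℝ :=
  Matrix.of fun i _ => if i = Fin.last S then (1/2:ℝ) else 0

noncomputable def sld (S : ℕ) : Fin (S+1) → ℝ := fun j => if j = Fin.last S then 1 else 1/2

noncomputable def slU (S : ℕ) (a : ℝ) : Matrix (Fin 1 ⊕ Fin (S+1)) (Fin 1 ⊕ Fin (S+1)) ℝ :=
  Matrix.fromBlocks (Matrix.of fun _ _ => a - 1/2) 0 (slCu S) (Matrix.diagonal (sld S))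

noncomputable def slM (S : ℕ) (a b : ℝ) : Matrix (Fin 1 ⊕ Fin (S+1)) (Fin 1 ⊕ Fin (S+1)) ℝ :=
  Matrix.fromBlocks (Matrix.of fun _ _ => a) (Matrix.of fun _ _ => b)
    (Matrix.of fun _ _ => 1/2) ((1/2:ℝ) • 1)

lemma slS1 (S : ℕ) : ((S:ℝ)+1) ≠ 0 := by positivity

lemma slDpDq (S : ℕ) : slDp S * slDq S = 1 := by
  have hS := slS1 S
  ext i j
  rw [Matrix.mul_apply, Fin.sum_univ_castSucc]
  simp only [slDp, slDq, Matrix.of_apply, if_neg (slcast_ne_last _), if_pos rfl,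
    Matrix.one_apply]
  induction i using Fin.lastCases with
  | last =>
    induction j using Fin.lastCases with
    | last =>
      simp only [if_pos rfl, if_neg (slcast_ne_last _), if_neg (slcast_ne_last _).symm,
        sub_mul, zero_mul, one_mul, zero_sub, neg_mul, Finset.sum_neg_distrib,
        Finset.sum_sub_distrib, Finset.sum_const, card_univ, Fintype.card_fin, nsmul_eq_mul,
        Finset.sum_const_zero]
      field_simp
      simp only [↓reduceIte, mul_one, one_mul]
      rw [mul_one_div_cancel hS]
    | cast j =>
      simp only [if_pos rfl, if_neg (slcast_ne_last _), if_neg (slcast_ne_last _).symm,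
        Fin.castSucc_inj, zero_sub, neg_one_mul, neg_sub, Finset.sum_sub_distrib,
        Finset.sum_ite_eq', Finset.mem_univ, if_true,
        Finset.sum_const, card_univ, Fintype.card_fin, nsmul_eq_mul, one_mul]
      field_simp
      ring_nf
  | cast i =>
    induction j using Fin.lastCases with
    | last =>
      simp only [if_pos rfl, if_neg (slcast_ne_last _), if_neg (slcast_ne_last _).symm,
        Fin.castSucc_inj, sub_mul, sub_zero, ite_mul, one_mul, zero_mul,
        Finset.sum_ite_eq, Finset.sum_ite_eq', Finset.mem_univ, if_true,
        Finset.sum_sub_distrib, Finset.sum_const, card_univ, Fintype.card_fin, nsmul_eq_mul,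
        Finset.sum_const_zero]
      ring_nf
    | cast j =>
      simp only [if_neg (slcast_ne_last _), if_neg (slcast_ne_last _).symm,
        Fin.castSucc_inj, sub_mul, sub_zero, ite_mul, one_mul, zero_mul,
        Finset.sum_ite_eq, Finset.sum_ite_eq', Finset.mem_univ, if_true,
        Finset.sum_sub_distrib, Finset.sum_const, card_univ, Fintype.card_fin, nsmul_eq_mul,
        Finset.sum_const_zero]
      ring_nf

lemma slDp_colsum (S : ℕ) (j : Fin (S+1)) :
    ∑ i, slDp S i j = if j = Fin.last S then (S:ℝ)+1 else 0 := by
  rw [Fin.sum_univ_castSucc]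
  simp only [slDp, Matrix.of_apply, if_pos rfl, if_neg (slcast_ne_last _)]
  induction j using Fin.lastCases with
  | last =>
    simp [Finset.sum_const]
  | cast j =>
    simp only [if_neg (slcast_ne_last _), if_neg (slcast_ne_last _).symm, Fin.castSucc_inj,
      sub_zero, Finset.sum_ite_eq, Finset.sum_ite_eq', Finset.mem_univ, if_true, if_pos rfl]
    ring

lemma slPQ (S : ℕ) : slP S * slQ S = 1 := by
  have h2 : slBq S + slBp S * slDq S = 0 := by
    ext i j
    rw [Matrix.add_apply, Matrix.mul_apply, Fin.sum_univ_castSucc]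
    simp [slBp, slBq, slDq, if_neg (slcast_ne_last _)]
  rw [slP, slQ, Matrix.fromBlocks_multiply, ← Matrix.fromBlocks_one]
  rw [Matrix.fromBlocks_inj]
  refine ⟨by simp, by simpa using h2, by simp, by simp [slDpDq]⟩

lemma slQP (S : ℕ) : slQ S * slP S = 1 := mul_eq_one_comm.mp (slPQ S)

lemma slMP (S : ℕ) (a b : ℝ) (hab : a + ((S:ℝ)+1) * b = 1) :
    slM S a b * slP S = slP S * slU S a := by
  rw [slM, slP, slU, Matrix.fromBlocks_multiply, Matrix.fromBlocks_multiply]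
  simp only [Matrix.mul_one, Matrix.one_mul, Matrix.mul_zero, Matrix.zero_mul,
    add_zero, zero_add]
  rw [Matrix.fromBlocks_inj]
  refine ⟨?_, ?_, ?_, ?_⟩
  · ext i j
    rw [Matrix.add_apply, Matrix.mul_apply, Fin.sum_univ_castSucc]
    simp [slBp, slCu, if_neg (slcast_ne_last _)]
  · ext i j
    rw [Matrix.add_apply, Matrix.mul_apply, Matrix.mul_apply, Matrix.mul_diagonal]
    simp only [Fin.sum_univ_one, Matrix.of_apply]
    rw [← Finset.mul_sum, slDp_colsum]
    induction j using Fin.lastCases with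
    | last => simp [slBp, sld]; linarith
    | cast j => simp [slBp, sld, if_neg (slcast_ne_last _)]
  · ext i j
    rw [Matrix.mul_apply, Fin.sum_univ_castSucc]
    simp [slDp, slCu, if_neg (slcast_ne_last _)]
  · ext i j
    rw [Matrix.add_apply, Matrix.mul_apply, Matrix.mul_diagonal, Matrix.smul_mul,
      Matrix.one_mul]
    simp only [Fin.sum_univ_one, Matrix.of_apply, Matrix.smul_apply, smul_eq_mul,
      slBp, slDp, sld]
    induction j using Fin.lastCases with
    | last => simp; norm_num
    | cast j =>
      simp only [if_neg (slcast_ne_last _)]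
      induction i using Fin.lastCases with
      | last => simp [if_neg (slcast_ne_last _).symm]
      | cast i => simp [if_neg (slcast_ne_last _), Fin.castSucc_inj]

lemma slM_factor (S : ℕ) (a b : ℝ) (hab : a + ((S:ℝ)+1) * b = 1) :
    slM S a b = slP S * slU S a * slQ S := by
  calc slM S a b = slM S a b * (slP S * slQ S) := by rw [slPQ, Matrix.mul_one]
  _ = (slM S a b * slP S) * slQ S := by rw [Matrix.mul_assoc]
  _ = slP S * slU S a * slQ S := by rw [slMP S a b hab]

lemma charpoly_conj {n : Type*} [Fintype n] [DecidableEq n]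
    (P Q A : Matrix n n ℝ) (hPQ : P * Q = 1) :
    (P * A * Q).charpoly = A.charpoly := by
  have hPQc : (C : ℝ →+* ℝ[X]).mapMatrix P * (C : ℝ →+* ℝ[X]).mapMatrix Q = 1 := by
    rw [← _root_.map_mul, hPQ, _root_.map_one]
  have hchar : charmatrix (P * A * Q)
      = (C : ℝ →+* ℝ[X]).mapMatrix P * charmatrix A * (C : ℝ →+* ℝ[X]).mapMatrix Q := by
    rw [charmatrix, charmatrix, _root_.map_mul, _root_.map_mul, Matrix.mul_sub, Matrix.sub_mul,
      Matrix.mul_assoc ((C : ℝ →+* ℝ[X]).mapMatrix P)]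
    congr 1
    rw [scalar_apply, ← Matrix.smul_one_eq_diagonal, mul_smul_comm, smul_mul_assoc, Matrix.mul_one, hPQc]
  rw [Matrix.charpoly, Matrix.charpoly, hchar, Matrix.det_mul, Matrix.det_mul]
  have h1 : ((C : ℝ →+* ℝ[X]).mapMatrix P).det * ((C : ℝ →+* ℝ[X]).mapMatrix Q).det = 1 := by
    rw [← Matrix.det_mul, hPQc, Matrix.det_one]
  calc ((C : ℝ →+* ℝ[X]).mapMatrix P).det * (charmatrix A).det * ((C : ℝ →+* ℝ[X]).mapMatrix Q).det
      = (charmatrix A).det * (((C : ℝ →+* ℝ[X]).mapMatrix P).det * ((C : ℝ →+* ℝ[X]).mapMatrix Q).det) := by ring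
  _ = (charmatrix A).det := by rw [h1, mul_one]

lemma charpoly_slU (S : ℕ) (a : ℝ) :
    (slU S a).charpoly = (X - C (a - 1/2)) * ∏ j, (X - C (sld S j)) := by
  rw [slU, Matrix.charpoly_fromBlocks_zero₁₂]
  congr 1
  · rw [Matrix.charpoly, Matrix.det_fin_one, charmatrix_apply_eq, Matrix.of_apply]
  · have h : charmatrix (Matrix.diagonal (sld S)) = Matrix.diagonal fun j => X - C (sld S j) := by
      ext i j
      rcases eq_or_ne i j with rfl | hij
      · simp [charmatrix_apply_eq]
      · simp [charmatrix_apply_ne _ _ _ hij, Matrix.diagonal_apply_ne _ hij]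
    rw [Matrix.charpoly, h, Matrix.det_diagonal]

def slEquiv (S : ℕ) : (Fin 1 ⊕ Fin (S+1)) ≃ Fin (S+1+1) :=
  finSumFinEquiv.trans (finCongr (by omega))

lemma slE_inl (S : ℕ) (i : Fin 1) : (slEquiv S) (Sum.inl i) = 0 := by
  apply Fin.ext
  simp [slEquiv, Fin.ext_iff]

lemma slE_inr (S : ℕ) (k : Fin (S+1)) : ((slEquiv S) (Sum.inr k)).val = 1 + k.val := by
  simp [slEquiv]; omega

lemma slM_reindex (S : ℕ) (wC wS : ℝ) :
    Matrix.reindex (slEquiv S) (slEquiv S)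
      (slM S (wC / (wC + ((S+1 : ℕ) : ℝ) * wS)) (wS / (wC + ((S+1 : ℕ) : ℝ) * wS)))
      = starM (S+1) wC wS := by
  have key : ∀ p q, starM (S+1) wC wS ((slEquiv S) p) ((slEquiv S) q)
      = slM S (wC / (wC + ((S+1 : ℕ) : ℝ) * wS)) (wS / (wC + ((S+1 : ℕ) : ℝ) * wS)) p q := by
    rintro (i | i) (j | j)
    · simp [starM, slM, slE_inl]
    · have h0 : (slEquiv S) (Sum.inr j) ≠ 0 := by
        intro h
        have := slE_inr S j
        rw [h] at this
        simp at this; omega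
      simp [starM, slM, slE_inl, h0]
    · have h0 : (slEquiv S) (Sum.inr i) ≠ 0 := by
        intro h
        have := slE_inr S i
        rw [h] at this
        simp at this; omega
      simp [starM, slM, slE_inl, h0]
    · have h0 : (slEquiv S) (Sum.inr i) ≠ 0 := by
        intro h
        have := slE_inr S i
        rw [h] at this
        simp at this; omega
      have h1 : ((slEquiv S) (Sum.inr i) = (slEquiv S) (Sum.inr j)) ↔ i = j := by
        rw [Fin.ext_iff, Fin.ext_iff, slE_inr, slE_inr]
        omega
      rcases eq_or_ne i j with rfl | hij
      · simp [starM, slM, h0, Matrix.one_apply]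
      · rw [starM]
        have h0' : (slEquiv S) (Sum.inr j) ≠ 0 := by
          intro h
          have := slE_inr S j
          rw [h] at this
          simp at this; omega
        rw [if_neg h0, if_neg h0', if_neg (h1.not.mpr hij)]
        simp [slM, Matrix.one_apply_ne hij]
  ext i j
  rw [Matrix.reindex_apply, Matrix.submatrix_apply, ← key, Equiv.apply_symm_apply,
    Equiv.apply_symm_apply]


lemma star_charpoly (S : ℕ) (wC wS : ℝ)
    (hab : wC / (wC + ((S+1 : ℕ) : ℝ) * wS) + ((S:ℝ)+1) * (wS / (wC + ((S+1 : ℕ) : ℝ) * wS)) = 1) :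
    (starM (S+1) wC wS).charpoly
      = (X - C (wC / (wC + ((S+1 : ℕ) : ℝ) * wS) - 1/2)) * ∏ j, (X - C (sld S j)) := by
  rw [← slM_reindex S wC wS, Matrix.charpoly_reindex,
    slM_factor S _ _ hab, charpoly_conj _ _ _ (slPQ S), charpoly_slU]

lemma sld_map (S : ℕ) :
    (Finset.univ.val.map (sld S)) = 1 ::ₘ Multiset.replicate S ((1:ℝ)/2) := by
  rw [Fin.univ_castSuccEmb, Finset.cons_val, Multiset.map_cons, Finset.map_val,
    Multiset.map_map]
  have h1 : sld S (Fin.last S) = 1 := if_pos rfl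
  have h2 : Multiset.map (sld S ∘ Fin.castSuccEmb) Finset.univ.val
      = Multiset.replicate S ((1:ℝ)/2) := by
    have hc : ∀ x ∈ Finset.univ.val, (sld S ∘ Fin.castSuccEmb) x = (1:ℝ)/2 :=
      fun x _ => if_neg (slcast_ne_last x)
    rw [Multiset.map_congr rfl hc]
    simp [Multiset.map_const']
  rw [h1, h2]

lemma prod_roots (S : ℕ) (x : ℝ) :
    ((X - C x) * ∏ j, (X - C (sld S j))).roots
      = x ::ₘ 1 ::ₘ Multiset.replicate S ((1:ℝ)/2) := by
  have hm : (∏ j, (X - C (sld S j))) = ((Finset.univ.val.map (sld S)).map fun r => X - C r).prod := by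
    rw [Multiset.map_map, Finset.prod_eq_multiset_prod]
    rfl
  have hne1 : (X - C x) ≠ 0 := (monic_X_sub_C x).ne_zero
  have hne2 : (∏ j, (X - C (sld S j))) ≠ 0 :=
    (monic_prod_of_monic _ _ fun _ _ => monic_X_sub_C _).ne_zero
  rw [Polynomial.roots_mul (mul_ne_zero hne1 hne2), Polynomial.roots_X_sub_C, hm,
    Polynomial.roots_multiset_prod_X_sub_C, sld_map, Multiset.singleton_add]

end StarAux

/-- spectrum of the star-with-loops transition matrix. -/
theorem stmt_3 (T : ℕ) (hT : 1 ≤ T) (wC wS : ℝ) (hwC : 0 < wC) (hwS : 0 < wS)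
    (D : ℝ) (hD : D = wC + T * wS) :
    eigs (starM T wC wS)
      = 1 ::ₘ (Multiset.replicate (T - 1) ((1 : ℝ) / 2) + {wC / D - 1 / 2}) ∧
    (∀ μ ∈ (eigs (starM T wC wS)).erase 1, |μ| ≤ 1 / 2) ∧
    (∀ v : Fin (T + 1) → ℝ, v 0 = 0 → (∑ j, v j) = 0 →
      starM T wC wS *ᵥ v = ((1 : ℝ) / 2) • v) := by
  obtain ⟨S, rfl⟩ : ∃ S, T = S + 1 := ⟨T - 1, by omega⟩
  subst hD
  have hDpos : (0:ℝ) < wC + ((S+1:ℕ):ℝ) * wS := by positivity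
  have hab : wC / (wC + ((S+1 : ℕ) : ℝ) * wS) + ((S:ℝ)+1) * (wS / (wC + ((S+1 : ℕ) : ℝ) * wS)) = 1 := by
    field_simp
    try push_cast
    try ring
  have h1 : eigs (starM (S+1) wC wS)
      = 1 ::ₘ (Multiset.replicate (S + 1 - 1) ((1 : ℝ) / 2)
          + {wC / (wC + ((S+1:ℕ):ℝ) * wS) - 1 / 2}) := by
    rw [eigs, star_charpoly S wC wS hab, prod_roots]
    simp only [Nat.add_sub_cancel]
    rw [add_comm (Multiset.replicate S ((1:ℝ)/2)), Multiset.singleton_add, Multiset.cons_swap]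
    
  refine ⟨h1, ?_, ?_⟩
  · intro μ hμ
    rw [h1, Multiset.erase_cons_head] at hμ
    rcases Multiset.mem_add.mp hμ with h | h
    · rw [Multiset.eq_of_mem_replicate h, abs_le]
      norm_num
    · rw [Multiset.mem_singleton.mp h]
      have ha1 : wC / (wC + ((S+1:ℕ):ℝ) * wS) ≤ 1 := by
        rw [div_le_one hDpos]
        have : (0:ℝ) ≤ ((S+1:ℕ):ℝ) * wS := by positivity
        linarith
      have ha0 : 0 ≤ wC / (wC + ((S+1:ℕ):ℝ) * wS) := by positivity
      rw [abs_le]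
      constructor <;> linarith
  · intro v hv0 hvsum
    funext i
    have hsum' : ∑ j : Fin (S+1), v j.succ = 0 := by
      rw [Fin.sum_univ_succ, hv0, zero_add] at hvsum
      exact hvsum
    rw [Matrix.mulVec, Pi.smul_apply, smul_eq_mul]
    rcases eq_or_ne i 0 with rfl | hi
    · rw [dotProduct, Fin.sum_univ_succ]
      simp [starM, Fin.succ_ne_zero, hv0]
      rw [← Finset.mul_sum, hsum', mul_zero]
    · obtain ⟨i', rfl⟩ : ∃ i', Fin.succ i' = i := by
        rcases Fin.eq_zero_or_eq_succ i with h | ⟨j, rfl⟩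
        · exact absurd h hi
        · exact ⟨j, rfl⟩
      rw [dotProduct, Fin.sum_univ_succ]
      simp [starM, Fin.succ_ne_zero, Fin.succ_inj, hv0, ite_mul]
end

section
/- Fix integers k ≥ 1, s ≥ k+2, T ≥ 1 and reals w_I, w_J > 0. Set p = (1/(T(k+1)(s−k))) · (((2^k − 2)T + 1)·T·w_I + w_J)/((2^k − 1)·T·w_I + w_J). Define the inner projection matrix P_I on state space {S ⊆ {1,…,s} : |S| = k+1} by P_I[S,S'] = p when |S ∩ S'| = k, P_I[S,S] = 1 − (k+1)(s−k−1)·p, and P_I[S,S'] = 0 otherwise. Then the diagonal entries of P_I are nonnegative, P_I is a symmetric row-stochastic matrix, and OneSidedGap(P_I) ≥ 1/(2T(k+1)). -/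
open Matrix Finset BigOperators Kronecker

section Aux
open Polynomial



variable {s : ℕ}

/-- number of r-subsets of B -/
lemma count_subsets (B : Finset (Fin s)) (r : ℕ) :
    ((Finset.univ.powersetCard r).filter (fun T => T ⊆ B)).card = B.card.choose r := by
  rw [← Finset.card_powersetCard r B]
  congr 1
  ext T
  simp [Finset.mem_powersetCard, and_comm]

/-- number of r-supersets of B -/
lemma count_supersets (B : Finset (Fin s)) (r : ℕ) (h : B.card ≤ r) :
    ((Finset.univ.powersetCard r).filter (fun R => B ⊆ R)).card
      = (s - B.card).choose (r - B.card) := by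
  have hc : ((Finset.univ : Finset (Fin s)) \ B).card = s - B.card := by
    rw [Finset.card_sdiff_of_subset (Finset.subset_univ B), Finset.card_univ, Fintype.card_fin]
  rw [← hc, ← Finset.card_powersetCard (r - B.card) (Finset.univ \ B)]
  apply Finset.card_bij' (fun R _ => R \ B) (fun T _ => T ∪ B)
  · intro R hR
    simp only [Finset.mem_filter, Finset.mem_powersetCard] at hR
    rw [Finset.mem_powersetCard]
    constructor
    · exact Finset.sdiff_subset_sdiff hR.1.1 le_rfl
    · rw [Finset.card_sdiff_of_subset hR.2, hR.1.2]
  · intro T hT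
    simp only [Finset.mem_powersetCard] at hT
    have hTB : Disjoint T B := Finset.disjoint_of_subset_left hT.1 (Finset.sdiff_disjoint)
    simp only [Finset.mem_filter, Finset.mem_powersetCard]
    refine ⟨⟨Finset.subset_univ _, ?_⟩, Finset.subset_union_right⟩
    rw [Finset.card_union_of_disjoint hTB, hT.2]
    omega
  · intro R hR
    simp only [Finset.mem_filter, Finset.mem_powersetCard] at hR
    exact Finset.sdiff_union_of_subset hR.2
  · intro T hT
    simp only [Finset.mem_powersetCard] at hT
    have hTB : Disjoint T B := Finset.disjoint_of_subset_left hT.1 (Finset.sdiff_disjoint)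
    rw [Finset.union_sdiff_cancel_right hTB]  -- guess name

/-- the level `j`: subsets of `Fin s` of size `j` -/
abbrev lvl (s j : ℕ) := {S : Finset (Fin s) // S.card = j}

/-- the "down" inclusion matrix from level b to level a -/
def Dmat (s a b : ℕ) : Matrix (lvl s a) (lvl s b) ℝ :=
  fun T S => if T.1 ⊆ S.1 then 1 else 0

lemma sum_lvl {j : ℕ} (f : Finset (Fin s) → ℝ) :
    ∑ S : lvl s j, f S.1 = ∑ R ∈ Finset.univ.powersetCard j, f R := by
  exact (Finset.sum_subtype (Finset.univ.powersetCard j)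
    (fun x => by simp [Finset.mem_powersetCard]) f).symm

lemma sum_ite_card {j : ℕ} (q : Finset (Fin s) → Prop) [DecidablePred q] :
    ∑ S : lvl s j, (if q S.1 then (1:ℝ) else 0)
      = ((Finset.univ.powersetCard j).filter q).card := by
  rw [sum_lvl (fun R => if q R then (1:ℝ) else 0), Finset.sum_boole]

-- entries of U * D (down then up read right-to-left: (Dᵀ * D))
lemma UD_apply (j : ℕ) (S S' : lvl s (j+1)) :
    ((Dmat s j (j+1))ᵀ * Dmat s j (j+1)) S S'
      = ((S.1 ∩ S'.1).card.choose j : ℝ) := by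
  classical
  simp only [Matrix.mul_apply, Matrix.transpose_apply, Dmat, ite_mul, one_mul, zero_mul]
  have : ∀ T : lvl s j, (if T.1 ⊆ S.1 then (if T.1 ⊆ S'.1 then (1:ℝ) else 0) else 0)
      = (if T.1 ⊆ S.1 ∩ S'.1 then (1:ℝ) else 0) := by
    intro T
    by_cases h1 : T.1 ⊆ S.1 <;> by_cases h2 : T.1 ⊆ S'.1 <;>
      simp [h1, h2, Finset.subset_inter_iff]
  rw [Finset.sum_congr rfl (fun T _ => this T), sum_ite_card (fun R => R ⊆ S.1 ∩ S'.1),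
    count_subsets]

-- entries of D * U at one level lower
lemma DU_apply (j : ℕ) (S S' : lvl s j) :
    (Dmat s j (j+1) * (Dmat s j (j+1))ᵀ) S S'
      = (((Finset.univ.powersetCard (j+1)).filter (fun R => S.1 ∪ S'.1 ⊆ R)).card : ℝ) := by
  classical
  simp only [Matrix.mul_apply, Matrix.transpose_apply, Dmat, ite_mul, one_mul, zero_mul]
  have : ∀ R : lvl s (j+1), (if S.1 ⊆ R.1 then (if S'.1 ⊆ R.1 then (1:ℝ) else 0) else 0)
      = (if S.1 ∪ S'.1 ⊆ R.1 then (1:ℝ) else 0) := by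
    intro R
    by_cases h1 : S.1 ⊆ R.1 <;> by_cases h2 : S'.1 ⊆ R.1 <;>
      simp [h1, h2, Finset.union_subset_iff]
  rw [Finset.sum_congr rfl (fun R _ => this R), sum_ite_card (fun R => S.1 ∪ S'.1 ⊆ R)]

lemma card_union_lvl {j : ℕ} (S S' : lvl s j) :
    (S.1 ∪ S'.1).card + (S.1 ∩ S'.1).card = 2 * j := by
  rw [Finset.card_union_add_card_inter, S.2, S'.2]; ring

lemma inter_card_lt {j : ℕ} {S S' : lvl s j} (h : S ≠ S') : (S.1 ∩ S'.1).card < j := by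
  rcases Nat.lt_or_ge (S.1 ∩ S'.1).card j with h' | h'
  · exact h'
  · exfalso
    have h1 : S.1 ∩ S'.1 ⊆ S.1 := Finset.inter_subset_left
    have h2 : (S.1 ∩ S'.1).card ≤ j := by
      have := Finset.card_le_card h1; rw [S.2] at this; exact this
    have : S.1 ∩ S'.1 = S.1 := Finset.eq_of_subset_of_card_le h1 (by omega)
    have hss : S.1 ⊆ S'.1 := by rw [← this]; exact Finset.inter_subset_right
    exact h (Subtype.ext (Finset.eq_of_subset_of_card_le hss (by rw [S.2, S'.2])))

/-- the sl₂ commutation relation on levels -/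
lemma commutation (j : ℕ) (hj : j + 2 ≤ s) :
    Dmat s (j+1) (j+2) * (Dmat s (j+1) (j+2))ᵀ
      = (Dmat s j (j+1))ᵀ * Dmat s j (j+1)
        + (((s:ℝ) - 2*(j+1)) • (1 : Matrix (lvl s (j+1)) (lvl s (j+1)) ℝ)) := by
  ext S S'
  rw [Matrix.add_apply, DU_apply, UD_apply]
  by_cases hSS : S = S'
  · subst hSS
    have hu : S.1 ∪ S.1 = S.1 := Finset.union_self _
    rw [hu, count_supersets S.1 (j+2) (by rw [S.2]; omega), S.2]
    have h1 : (s - (j+1)).choose ((j+2) - (j+1)) = s - (j+1) := by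
      have : (j+2) - (j+1) = 1 := by omega
      rw [this, Nat.choose_one_right]
    rw [h1]
    have h2 : (j+1).choose j = j + 1 := by
      simp [Nat.choose_symm (by omega : j ≤ j+1)]
    rw [Finset.inter_self, S.2, h2]
    simp only [Matrix.smul_apply, Matrix.one_apply_eq, smul_eq_mul, mul_one]
    have : (j:ℝ) + 1 ≤ s := by exact_mod_cast by omega
    push_cast [Nat.cast_sub (by omega : j + 1 ≤ s)]
    ring
  · have hc : (S.1 ∩ S'.1).card < j + 1 := inter_card_lt hSS
    have hcu := card_union_lvl S S'
    simp only [Matrix.smul_apply, Matrix.one_apply_ne hSS, smul_zero, add_zero]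
    by_cases hck : (S.1 ∩ S'.1).card = j
    · have hu : (S.1 ∪ S'.1).card = j + 2 := by omega
      rw [count_supersets _ _ (by omega), hu, hck]
      simp [Nat.choose_self]
    · have hu : j + 2 < (S.1 ∪ S'.1).card := by omega
      have : ((Finset.univ.powersetCard (j+2)).filter (fun R => S.1 ∪ S'.1 ⊆ R)) = ∅ := by
        apply Finset.filter_false_of_mem
        intro R hR hsub
        rw [Finset.mem_powersetCard] at hR
        have := Finset.card_le_card hsub
        omega
      rw [this]
      have : (S.1 ∩ S'.1).card.choose j = 0 := Nat.choose_eq_zero_of_lt (by omega)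
      rw [this]
      simp

lemma sum_Dmat (a b : ℕ) (x : lvl s b → ℝ) :
    ∑ T : lvl s a, (Dmat s a b *ᵥ x) T = (b.choose a : ℝ) * ∑ S : lvl s b, x S := by
  simp only [Matrix.mulVec, dotProduct, Dmat, ite_mul, one_mul, zero_mul]
  rw [Finset.sum_comm, Finset.mul_sum]
  apply Finset.sum_congr rfl
  intro S _
  have : ∀ T : lvl s a, (if T.1 ⊆ S.1 then x S else 0)
      = (if T.1 ⊆ S.1 then (1:ℝ) else 0) * x S := by
    intro T; by_cases h : T.1 ⊆ S.1 <;> simp [h]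
  rw [Finset.sum_congr rfl (fun T _ => this T), ← Finset.sum_mul,
    sum_ite_card (fun R => R ⊆ S.1), count_subsets, S.2]

/-- the key inductive bound on the down operator restricted to mean-zero vectors -/
lemma down_bound : ∀ (j : ℕ), j + 1 ≤ s → ∀ x : lvl s (j+1) → ℝ,
    (∑ S : lvl s (j+1), x S = 0) →
    (Dmat s j (j+1) *ᵥ x) ⬝ᵥ (Dmat s j (j+1) *ᵥ x)
      ≤ (j : ℝ) * ((s:ℝ) - (j+1)) * (x ⬝ᵥ x) := by
  intro j
  induction j with
  | zero =>
    intro hs x hx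
    have hz : Dmat s 0 1 *ᵥ x = 0 := by
      funext T
      have : ∀ S : lvl s 1, Dmat s 0 1 T S = 1 := by
        intro S
        have hT : T.1 = ∅ := Finset.card_eq_zero.mp T.2
        simp [Dmat, hT]
      simp only [Matrix.mulVec, dotProduct]
      rw [Finset.sum_congr rfl (fun S _ => by rw [this S, one_mul])]
      simpa using hx
    rw [hz]
    simp only [zero_dotProduct, Nat.cast_zero, zero_mul]
    exact le_rfl
  | succ j ih =>
    intro hs x hx
    set D := Dmat s (j+1) (j+2) with hD
    set y := D *ᵥ x with hy
    have hsy : ∑ T : lvl s (j+1), y T = 0 := by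
      rw [hy, sum_Dmat, hx, mul_zero]
    have hN : y ⬝ᵥ y = x ⬝ᵥ (Dᵀ *ᵥ y) := by
      rw [Matrix.dotProduct_mulVec x, Matrix.vecMul_transpose, hy]
    set z := Dᵀ *ᵥ y with hz
    set N := y ⬝ᵥ y with hNdef
    have hxx : (0:ℝ) ≤ x ⬝ᵥ x := Finset.sum_nonneg fun i _ => mul_self_nonneg _
    have hNnn : (0:ℝ) ≤ N := Finset.sum_nonneg fun i _ => mul_self_nonneg _
    have hCS : N^2 ≤ (x ⬝ᵥ x) * (z ⬝ᵥ z) := by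
      rw [hN]
      have h := Finset.sum_mul_sq_le_sq_mul_sq Finset.univ x z
      have e1 : x ⬝ᵥ z = ∑ i : lvl s (j+2), x i * z i := rfl
      have e2 : x ⬝ᵥ x = ∑ i : lvl s (j+2), x i ^ 2 := by
        simp [dotProduct, sq]
      have e3 : z ⬝ᵥ z = ∑ i : lvl s (j+2), z i ^ 2 := by
        simp [dotProduct, sq]
      rw [e1, e2, e3]
      exact h
    have hzz : z ⬝ᵥ z = y ⬝ᵥ ((D * Dᵀ) *ᵥ y) := by
      rw [← Matrix.mulVec_mulVec, Matrix.dotProduct_mulVec y, ← Matrix.mulVec_transpose D y, hz]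
    have hcom := commutation (s := s) j hs
    rw [← hD] at hcom
    have hzz2 : z ⬝ᵥ z ≤ ((j:ℝ) * ((s:ℝ) - (j+1)) + ((s:ℝ) - 2*(j+1))) * N := by
      rw [hzz, hcom, Matrix.add_mulVec, dotProduct_add, Matrix.smul_mulVec,
        Matrix.one_mulVec, dotProduct_smul]
      have h1 : y ⬝ᵥ (((Dmat s j (j+1))ᵀ * Dmat s j (j+1)) *ᵥ y)
          = (Dmat s j (j+1) *ᵥ y) ⬝ᵥ (Dmat s j (j+1) *ᵥ y) := by
        rw [← Matrix.mulVec_mulVec, Matrix.dotProduct_mulVec y, Matrix.vecMul_transpose]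
      rw [h1, add_mul]
      have h2 := ih (by omega) y hsy
      rw [← hNdef] at h2
      simp only [smul_eq_mul, ← hNdef]
      linarith
    have hfac : ((j:ℝ) * ((s:ℝ) - (j+1)) + ((s:ℝ) - 2*(j+1)))
        = ((j:ℝ)+1) * ((s:ℝ) - (j+2)) := by ring
    rw [hfac] at hzz2
    have hs2 : (j:ℝ) + 2 ≤ s := by exact_mod_cast hs
    have hfacnn : (0:ℝ) ≤ ((j:ℝ)+1) * ((s:ℝ) - (j+2)) := by
      apply mul_nonneg
      · positivity
      · linarith
    have key : N * N ≤ ((x ⬝ᵥ x) * (((j:ℝ)+1) * ((s:ℝ) - (j+2)))) * N := by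
      have step : (x ⬝ᵥ x) * (z ⬝ᵥ z) ≤ ((x ⬝ᵥ x) * (((j:ℝ)+1) * ((s:ℝ) - (j+2)))) * N := by
        rw [mul_assoc]
        exact mul_le_mul_of_nonneg_left hzz2 hxx
      have : N * N = N ^ 2 := (sq N).symm
      linarith [hCS, step]
    have goal : N ≤ (x ⬝ᵥ x) * (((j:ℝ)+1) * ((s:ℝ) - (j+2))) := by
      rcases eq_or_lt_of_le hNnn with h0 | h0
      · have h1 : (0:ℝ) ≤ (x ⬝ᵥ x) * (((j:ℝ)+1) * ((s:ℝ) - (j+2))) :=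
          mul_nonneg hxx hfacnn
        linarith
      · exact le_of_mul_le_mul_right key h0
    have final : (x ⬝ᵥ x) * (((j:ℝ)+1) * ((s:ℝ) - (j+2)))
        = (((j+1:ℕ)):ℝ) * ((s:ℝ) - ((j+1)+1)) * (x ⬝ᵥ x) := by push_cast; ring
    calc (Dmat s (j+1) ((j+1)+1) *ᵥ x) ⬝ᵥ (Dmat s (j+1) ((j+1)+1) *ᵥ x) = N := rfl
      _ ≤ (x ⬝ᵥ x) * (((j:ℝ)+1) * ((s:ℝ) - (j+2))) := goal
      _ = (((j+1:ℕ)):ℝ) * ((s:ℝ) - ((j+1)+1)) * (x ⬝ᵥ x) := final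
      _ = (((j+1:ℕ)):ℝ) * ((s:ℝ) - (((j+1:ℕ):ℝ)+1)) * (x ⬝ᵥ x) := by push_cast; ring


/-- the row sums of the Johnson adjacency indicator -/
lemma adj_row_sum (k : ℕ) (hs : k + 2 ≤ s) (S : lvl s (k+1)) :
    ∑ S' : lvl s (k+1), (if (S.1 ∩ S'.1).card = k then (1:ℝ) else 0)
      = ((k:ℝ)+1) * ((s:ℝ) - (k:ℝ) - 1) := by
  classical
  -- first: row sum of choose((S∩S').card, k) equals (k+1)(s-k)
  have hUD : ∑ S' : lvl s (k+1), (((S.1 ∩ S'.1).card.choose k : ℕ) : ℝ)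
      = ((k:ℝ)+1) * ((s:ℝ) - (k:ℝ)) := by
    have e1 : ∀ S' : lvl s (k+1), (((S.1 ∩ S'.1).card.choose k : ℕ) : ℝ)
        = ∑ T : lvl s k, (if T.1 ⊆ S.1 then (1:ℝ) else 0) * (if T.1 ⊆ S'.1 then (1:ℝ) else 0) := by
      intro S'
      rw [← UD_apply k S S']
      simp [Matrix.mul_apply, Dmat, Matrix.transpose_apply]
    rw [Finset.sum_congr rfl (fun S' _ => e1 S'), Finset.sum_comm]
    have e2 : ∀ T : lvl s k, ∑ S' : lvl s (k+1),
        (if T.1 ⊆ S.1 then (1:ℝ) else 0) * (if T.1 ⊆ S'.1 then (1:ℝ) else 0)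
        = (if T.1 ⊆ S.1 then (1:ℝ) else 0) * ((s:ℝ) - (k:ℝ)) := by
      intro T
      rw [← Finset.mul_sum, sum_ite_card (fun R => T.1 ⊆ R),
        count_supersets T.1 (k+1) (by rw [T.2]; omega), T.2]
      have : (s - k).choose (k + 1 - k) = s - k := by
        have h1 : k + 1 - k = 1 := by omega
        rw [h1, Nat.choose_one_right]
      rw [this, Nat.cast_sub (by omega)]
    rw [Finset.sum_congr rfl (fun T _ => e2 T), ← Finset.sum_mul,
      sum_ite_card (fun R => R ⊆ S.1), count_subsets, S.2]
    have : (k+1).choose k = k + 1 := by simp [Nat.choose_symm (by omega : k ≤ k+1)]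
    rw [this]
    push_cast
    ring
  -- pointwise: choose(c,k) = ite(c=k) + (k+1)·ite(S'=S)
  have e3 : ∀ S' : lvl s (k+1), (((S.1 ∩ S'.1).card.choose k : ℕ) : ℝ)
      = (if (S.1 ∩ S'.1).card = k then (1:ℝ) else 0)
        + (if S' = S then ((k:ℝ)+1) else 0) := by
    intro S'
    by_cases h : S' = S
    · subst h
      rw [Finset.inter_self, S'.2]
      have : (k+1).choose k = k + 1 := by simp [Nat.choose_symm (by omega : k ≤ k+1)]
      simp [this]
    · have hlt : (S.1 ∩ S'.1).card < k + 1 := inter_card_lt (fun hh => h hh.symm)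
      by_cases hc : (S.1 ∩ S'.1).card = k
      · simp [hc, h]
      · have : (S.1 ∩ S'.1).card.choose k = 0 := Nat.choose_eq_zero_of_lt (by omega)
        simp [this, hc, h]
  have e4 := Finset.sum_congr rfl (fun S' (_ : S' ∈ Finset.univ) => e3 S')
  rw [e4, Finset.sum_add_distrib, Finset.sum_ite_eq' Finset.univ S (fun _ => ((k:ℝ)+1))] at hUD
  simp only [Finset.mem_univ, if_true] at hUD
  linarith


variable {n : Type*} [Fintype n] [DecidableEq n]



lemma my_charpoly_conj (V W D : Matrix n n ℝ)
    (h1 : V * W = 1) (h2 : W * V = 1) : (V * D * W).charpoly = D.charpoly := by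
  unfold Matrix.charpoly
  have key : charmatrix (V * D * W)
      = ((C : ℝ →+* ℝ[X]).mapMatrix V) * charmatrix D * ((C : ℝ →+* ℝ[X]).mapMatrix W) := by
    unfold charmatrix
    rw [Matrix.mul_sub, Matrix.sub_mul]
    congr 1
    · have hc : Commute (scalar n (X:ℝ[X])) (C.mapMatrix V) :=
        Matrix.scalar_commute _ (fun r => Commute.all _ _) _
      rw [← hc.eq, mul_assoc, ← _root_.map_mul, h1]
      simp
    · rw [← _root_.map_mul, ← _root_.map_mul]
  rw [key, Matrix.det_mul, Matrix.det_mul]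
  have : ((C : ℝ →+* ℝ[X]).mapMatrix V).det * ((C : ℝ →+* ℝ[X]).mapMatrix W).det = 1 := by
    rw [mul_comm, ← Matrix.det_mul, ← _root_.map_mul, h2]
    simp
  calc ((C : ℝ →+* ℝ[X]).mapMatrix V).det * (charmatrix D).det
        * ((C : ℝ →+* ℝ[X]).mapMatrix W).det
      = ((C : ℝ →+* ℝ[X]).mapMatrix V).det * ((C : ℝ →+* ℝ[X]).mapMatrix W).det
        * (charmatrix D).det := by ring
    _ = (charmatrix D).det := by rw [this, one_mul]

lemma my_charpoly_diagonal (d : n → ℝ) :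
    (Matrix.diagonal d).charpoly = ∏ i, (X - C (d i)) := by
  unfold Matrix.charpoly
  have : charmatrix (Matrix.diagonal d) = Matrix.diagonal (fun i => X - C (d i)) := by
    ext i j
    by_cases h : i = j
    · subst h; simp
    · simp [charmatrix_apply_ne _ _ _ h, Matrix.diagonal_apply_ne _ h]
  rw [this, Matrix.det_diagonal]

lemma my_roots_charpoly (A : Matrix n n ℝ) (hA : A.IsHermitian) :
    A.charpoly.roots = Multiset.map hA.eigenvalues Finset.univ.val := by
  have hspec := hA.spectral_theorem
  have hdiag : Matrix.diagonal ((RCLike.ofReal : ℝ → ℝ) ∘ hA.eigenvalues)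
      = Matrix.diagonal hA.eigenvalues := by
    congr 1
  have h1 : (hA.eigenvectorUnitary : Matrix n n ℝ) * (star (hA.eigenvectorUnitary : Matrix n n ℝ)) = 1 :=
    Matrix.mem_unitaryGroup_iff.mp hA.eigenvectorUnitary.2
  have h2 : (star (hA.eigenvectorUnitary : Matrix n n ℝ)) * (hA.eigenvectorUnitary : Matrix n n ℝ) = 1 :=
    Matrix.mem_unitaryGroup_iff'.mp hA.eigenvectorUnitary.2
  have hch : A.charpoly = (Matrix.diagonal hA.eigenvalues).charpoly := by
    conv_lhs => rw [hspec]
    rw [hdiag]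
    exact my_charpoly_conj _ _ _ h1 h2
  rw [hch, my_charpoly_diagonal]
  have : ∏ i, (X - C (hA.eigenvalues i))
      = (Multiset.map (fun a => X - C a) (Multiset.map hA.eigenvalues Finset.univ.val)).prod := by
    rw [Multiset.map_map]
    rfl
  rw [this, Polynomial.roots_multiset_prod_X_sub_C]


/-- dot products of eigenvector basis vectors -/
lemma eigvec_dot (A : Matrix n n ℝ) (hA : A.IsHermitian) (i j : n) :
    (⇑(hA.eigenvectorBasis i) : n → ℝ) ⬝ᵥ (⇑(hA.eigenvectorBasis j) : n → ℝ)
      = if i = j then 1 else 0 := by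
  have h := orthonormal_iff_ite.mp hA.eigenvectorBasis.orthonormal i j
  rw [← h]
  rw [PiLp.inner_apply]
  simp [dotProduct, mul_comm]

lemma count_big_eigs (A : Matrix n n ℝ) (hA : A.IsHermitian) (c : ℝ)
    (hc : ∀ x : n → ℝ, (∑ i, x i) = 0 → x ⬝ᵥ (A *ᵥ x) ≤ c * (x ⬝ᵥ x)) :
    (Finset.univ.filter (fun i => c < hA.eigenvalues i)).card ≤ 1 := by
  rw [Finset.card_le_one]
  intro i hi j hj
  simp only [Finset.mem_filter] at hi hj
  by_contra hij
  set vi := (⇑(hA.eigenvectorBasis i) : n → ℝ) with hvi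
  set vj := (⇑(hA.eigenvectorBasis j) : n → ℝ) with hvj
  have hAvi : A *ᵥ vi = hA.eigenvalues i • vi := hA.mulVec_eigenvectorBasis i
  have hAvj : A *ᵥ vj = hA.eigenvalues j • vj := hA.mulVec_eigenvectorBasis j
  have hii : vi ⬝ᵥ vi = 1 := by simpa using eigvec_dot A hA i i
  have hjj : vj ⬝ᵥ vj = 1 := by simpa using eigvec_dot A hA j j
  have hij0 : vi ⬝ᵥ vj = 0 := by simpa [hij] using eigvec_dot A hA i j
  have hji0 : vj ⬝ᵥ vi = 0 := by
    rw [dotProduct_comm]; exact hij0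
  -- if an eigenvector has zero sum, its eigenvalue is ≤ c
  have key : ∀ (l : ℝ) (v : n → ℝ), A *ᵥ v = l • v → v ⬝ᵥ v = 1 →
      (∑ k, v k) = 0 → l ≤ c := by
    intro l v hv hvv hsum
    have := hc v hsum
    rw [hv, dotProduct_smul, hvv] at this
    simpa using this
  have hai : (∑ k, vi k) ≠ 0 := by
    intro h0
    exact absurd (key _ _ hAvi hii h0) (not_le.mpr hi.2)
  have haj : (∑ k, vj k) ≠ 0 := by
    intro h0
    exact absurd (key _ _ hAvj hjj h0) (not_le.mpr hj.2)
  set a := ∑ k, vi k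
  set b := ∑ k, vj k
  set w : n → ℝ := b • vi - a • vj with hw
  have hsw : (∑ k, w k) = 0 := by
    simp only [hw, Pi.sub_apply, Pi.smul_apply, smul_eq_mul]
    rw [Finset.sum_sub_distrib, ← Finset.mul_sum, ← Finset.mul_sum]
    ring
  have hq := hc w hsw
  have hAw : A *ᵥ w = b • (hA.eigenvalues i • vi) - a • (hA.eigenvalues j • vj) := by
    rw [hw, Matrix.mulVec_sub, Matrix.mulVec_smul, Matrix.mulVec_smul, hAvi, hAvj]
  have hql : w ⬝ᵥ (A *ᵥ w) = b^2 * hA.eigenvalues i + a^2 * hA.eigenvalues j := by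
    rw [hAw, hw]
    simp only [sub_dotProduct, dotProduct_sub, smul_dotProduct,
      dotProduct_smul, smul_eq_mul, hii, hjj, hij0, hji0]
    ring
  have hqr : w ⬝ᵥ w = b^2 + a^2 := by
    rw [hw]
    simp only [sub_dotProduct, dotProduct_sub, smul_dotProduct,
      dotProduct_smul, smul_eq_mul, hii, hjj, hij0, hji0]
    ring
  rw [hql, hqr] at hq
  have ha2 : 0 < a^2 := by positivity
  have hb2 : 0 < b^2 := by positivity
  nlinarith [hi.2, hj.2]

lemma secondEig_le (A : Matrix n n ℝ) (hA : A.IsHermitian) (c : ℝ)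
    (hcard : 2 ≤ Fintype.card n)
    (hc : ∀ x : n → ℝ, (∑ i, x i) = 0 → x ⬝ᵥ (A *ᵥ x) ≤ c * (x ⬝ᵥ x)) :
    secondEig A ≤ c := by
  classical
  set N := Fintype.card n with hN
  set L := sortedEigs A with hL
  have hLlen : L.length = N := by
    rw [hL, sortedEigs, Multiset.length_sort, eigs, my_roots_charpoly A hA,
      Multiset.card_map, hN]
    simp [Finset.card_univ]
  have hsorted : L.Pairwise (· ≤ ·) := Multiset.pairwise_sort _ _
  have hfilter : ((eigs A).filter (fun r => c < r)).card ≤ 1 := by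
    rw [eigs, my_roots_charpoly A hA, Multiset.filter_map]
    rw [Multiset.card_map]
    have : (Multiset.filter ((fun r => c < r) ∘ hA.eigenvalues) Finset.univ.val).card
        = (Finset.univ.filter (fun i => c < hA.eigenvalues i)).card := rfl
    rw [this]
    exact count_big_eigs A hA c hc
  by_contra hcon
  push_neg at hcon
  -- hcon : c < secondEig A
  have hidx : N - 2 < L.length := by omega
  have hsec : secondEig A = L.get ⟨N - 2, hidx⟩ := by
    rw [secondEig, ← hL, ← hN, List.getD_eq_getElem (hn := hidx), List.get_eq_getElem]  -- name guess
  rw [hsec] at hcon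
  -- all entries from index N-2 are > c
  have hdrop : ∀ x ∈ L.drop (N - 2), c < x := by
    intro x hx
    obtain ⟨j, hjlt, hjx⟩ := List.mem_iff_getElem.mp hx
    have hjlt' : N - 2 + j < L.length := by
      rw [List.length_drop] at hjlt; omega
    have hjx2 : L.get ⟨N - 2 + j, hjlt'⟩ = x := by
      rw [← hjx]
      simpa [List.get_eq_getElem] using (List.getElem_drop (l := L) (i := N-2) (j := j) hjlt')
    have hle : L.get ⟨N - 2, hidx⟩ ≤ L.get ⟨N - 2 + j, hjlt'⟩ := by
      rcases Nat.eq_zero_or_pos j with h0 | h0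
      · subst h0; exact le_rfl
      · exact List.pairwise_iff_get.mp hsorted ⟨N - 2, hidx⟩
          ⟨N - 2 + j, hjlt'⟩ (Fin.mk_lt_mk.mpr (by omega))
    rw [hjx2] at hle
    exact lt_of_lt_of_le hcon hle
  have hdroplen : (L.drop (N - 2)).length = 2 := by
    rw [List.length_drop, hLlen]; omega
  have h2 : 2 ≤ (L.filter (fun x => decide (c < x))).length := by
    have hsub : List.Sublist ((L.drop (N - 2)).filter (fun x => decide (c < x)))
        (L.filter (fun x => decide (c < x))) :=
      List.Sublist.filter _ (List.drop_sublist _ _)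
    have heq : (L.drop (N - 2)).filter (fun x => decide (c < x)) = L.drop (N - 2) :=
      List.filter_eq_self.mpr (fun a ha => by simpa using hdrop a ha)
    calc 2 = (L.drop (N - 2)).length := hdroplen.symm
      _ = ((L.drop (N - 2)).filter (fun x => decide (c < x))).length := by rw [heq]
      _ ≤ _ := hsub.length_le
  have hcoe : ((eigs A).filter (fun r => c < r)).card
      = (L.filter (fun x => decide (c < x))).length := by
    have h : (L : Multiset ℝ) = eigs A := Multiset.sort_eq _ _
    rw [← h]
    simp
  omega


end Aux

/-- the inner projection chain P_I on (k+1)-subsets of an s-element set,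
with off-diagonal transition probability p, has nonnegative diagonal, is symmetric
row-stochastic, and satisfies OneSidedGap(P_I) ≥ 1/(2T(k+1)). -/
theorem stmt_12 (k s T : ℕ) (hk : 1 ≤ k) (hs : k + 2 ≤ s) (hT : 1 ≤ T)
    (wI wJ : ℝ) (hwI : 0 < wI) (hwJ : 0 < wJ)
    (p : ℝ)
    (hp : p = (1 / ((T : ℝ) * ((k : ℝ) + 1) * ((s : ℝ) - k)))
        * ((((2 : ℝ) ^ k - 2) * T + 1) * T * wI + wJ) / (((2 : ℝ) ^ k - 1) * T * wI + wJ))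
    (PI : Matrix {S : Finset (Fin s) // S.card = k + 1} {S : Finset (Fin s) // S.card = k + 1} ℝ)
    (hPI : ∀ S S', PI S S' =
      if S = S' then 1 - ((k : ℝ) + 1) * ((s : ℝ) - k - 1) * p
      else if (S.1 ∩ S'.1).card = k then p else 0) :
    (∀ S, 0 ≤ PI S S) ∧ RowStochastic PI ∧ PI.IsSymm ∧
    oneSidedGap PI ≥ 1 / (2 * (T : ℝ) * ((k : ℝ) + 1)) := by
  classical
  have hT1 : (1:ℝ) ≤ (T:ℝ) := by exact_mod_cast hT
  have hT0 : (0:ℝ) < T := by linarith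
  have hk1 : (1:ℝ) ≤ (k:ℝ) := by exact_mod_cast hk
  have hk0 : (0:ℝ) ≤ (k:ℝ) := by linarith
  have hsk : (k:ℝ) + 2 ≤ (s:ℝ) := by exact_mod_cast hs
  have h2k : (2:ℝ) ≤ 2^k := by
    calc (2:ℝ) = 2^1 := (pow_one 2).symm
    _ ≤ 2^k := pow_le_pow_right₀ (by norm_num) hk
  set num := (((2:ℝ)^k - 2) * T + 1) * T * wI + wJ with hnumdef
  set den := ((2:ℝ)^k - 1) * T * wI + wJ with hdendef
  set Z := (T:ℝ) * ((k:ℝ)+1) * ((s:ℝ) - k) with hZdef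
  have hden0 : 0 < den := by
    have h1 : (0:ℝ) < ((2:ℝ)^k - 1) * T * wI :=
      mul_pos (mul_pos (by linarith) hT0) hwI
    rw [hdendef]; linarith
  have hnum0 : 0 < num := by
    have h1 : (0:ℝ) < (((2:ℝ)^k - 2) * T + 1) :=
      by nlinarith [mul_nonneg (by linarith : (0:ℝ) ≤ (2:ℝ)^k - 2) hT0.le]
    have h2 : (0:ℝ) < (((2:ℝ)^k - 2) * T + 1) * T * wI := mul_pos (mul_pos h1 hT0) hwI
    rw [hnumdef]; linarith
  have hZ0 : 0 < Z := by
    rw [hZdef]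
    have : (0:ℝ) < (s:ℝ) - k := by linarith
    positivity
  have hZden : 0 < Z * den := mul_pos hZ0 hden0
  have hpe : p = num / (Z * den) := by
    rw [hp, hZdef]
    field_simp
  have hp0 : 0 ≤ p := by
    rw [hpe]; exact div_nonneg hnum0.le hZden.le
  have h2T : (0:ℝ) < 2 * (T:ℝ) * ((k:ℝ)+1) := by positivity
  have hkey : den ≤ 2 * num := by
    nlinarith [mul_nonneg (mul_pos hT0 hwI).le
        (mul_nonneg (by linarith : (0:ℝ) ≤ (2:ℝ)^k - 2) (by linarith : (0:ℝ) ≤ 2*(T:ℝ)-1)),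
      mul_pos hT0 hwI]
  have hps : 1 / (2 * (T:ℝ) * ((k:ℝ)+1)) ≤ p * s := by
    rw [hpe, div_mul_eq_mul_div, div_le_div_iff₀ h2T hZden]
    have hss : (s:ℝ) - k ≤ s := by linarith
    have c1 : ((s:ℝ) - k) * den ≤ (s:ℝ) * (2 * num) := by
      calc ((s:ℝ)-k)*den ≤ (s:ℝ)*den := mul_le_mul_of_nonneg_right hss hden0.le
        _ ≤ (s:ℝ)*(2*num) := mul_le_mul_of_nonneg_left hkey (by positivity)
    calc 1 * (Z * den) = (T:ℝ)*((k:ℝ)+1)*(((s:ℝ)-k)*den) := by rw [hZdef]; ring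
      _ ≤ (T:ℝ)*((k:ℝ)+1)*((s:ℝ)*(2*num)) :=
          mul_le_mul_of_nonneg_left c1 (by positivity)
      _ = num * s * (2*T*((k:ℝ)+1)) := by ring
  have hpd : ((k:ℝ)+1) * ((s:ℝ)-k-1) * p ≤ 1 := by
    rw [hpe]
    have e : ((k:ℝ)+1)*((s:ℝ)-(k:ℝ)-1)*(num/(Z*den))
        = (((k:ℝ)+1)*((s:ℝ)-(k:ℝ)-1)*num)/(Z*den) := by ring
    rw [e, div_le_one hZden]
    have c2 : num ≤ (T:ℝ) * den := by
      nlinarith [mul_nonneg (mul_pos hT0 hwI).le (by linarith : (0:ℝ) ≤ (T:ℝ) - 1),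
        mul_nonneg hwJ.le (by linarith : (0:ℝ) ≤ (T:ℝ) - 1)]
    have hsk1 : (0:ℝ) ≤ (s:ℝ) - k - 1 := by linarith
    calc ((k:ℝ)+1)*((s:ℝ)-(k:ℝ)-1)*num
        ≤ ((k:ℝ)+1)*((s:ℝ)-(k:ℝ)-1)*((T:ℝ)*den) :=
          mul_le_mul_of_nonneg_left c2 (by positivity)
      _ = ((T:ℝ)*((k:ℝ)+1)*den) * ((s:ℝ)-(k:ℝ)-1) := by ring
      _ ≤ ((T:ℝ)*((k:ℝ)+1)*den) * ((s:ℝ)-(k:ℝ)) := by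
          apply mul_le_mul_of_nonneg_left (by linarith)
          have : (0:ℝ) < (T:ℝ)*((k:ℝ)+1)*den :=
            mul_pos (mul_pos hT0 (by linarith)) hden0
          linarith
      _ = Z * den := by rw [hZdef]; ring
  have hdiag : ∀ S, 0 ≤ PI S S := by
    intro S
    rw [hPI S S, if_pos rfl]
    linarith
  have hnonneg : ∀ S S', 0 ≤ PI S S' := by
    intro S S'
    rw [hPI]
    split_ifs
    · linarith
    · exact hp0
    · exact le_rfl
  have hrow : ∀ S, ∑ S', PI S S' = 1 := by
    intro S
    have hpt : ∀ S', PI S S' = (if (S.1 ∩ S'.1).card = k then (1:ℝ) else 0) * p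
        + (if S = S' then (1 - ((k:ℝ)+1)*((s:ℝ)-k-1)*p) else 0) := by
      intro S'
      rw [hPI]
      by_cases h : S = S'
      · subst h
        rw [if_pos rfl, if_pos rfl, if_neg (by rw [Finset.inter_self, S.2]; omega)]
        ring
      · rw [if_neg h, if_neg h, add_zero]
        by_cases hc : (S.1 ∩ S'.1).card = k
        · rw [if_pos hc, if_pos hc, one_mul]
        · rw [if_neg hc, if_neg hc, zero_mul]
    rw [Finset.sum_congr rfl (fun S' _ => hpt S'), Finset.sum_add_distrib,
      ← Finset.sum_mul, adj_row_sum k hs S, Finset.sum_ite_eq Finset.univ S]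
    simp only [Finset.mem_univ, if_true]
    ring
  have hsymm : PI.IsSymm := by
    show PIᵀ = PI
    ext S S'
    rw [Matrix.transpose_apply, hPI, hPI]
    by_cases h : S = S'
    · subst h; rfl
    · rw [if_neg h, if_neg (fun hh => h hh.symm), Finset.inter_comm]
  have hherm : PI.IsHermitian := by
    show PIᴴ = PI
    ext S S'
    rw [Matrix.conjTranspose_apply]
    have := congrFun (congrFun hsymm S) S'
    rw [Matrix.transpose_apply] at this
    simpa using this
  have hquad : ∀ x : lvl s (k+1) → ℝ, (∑ i, x i) = 0 →
      x ⬝ᵥ (PI *ᵥ x) ≤ (1 - p * s) * (x ⬝ᵥ x) := by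
    intro x hx
    have hchoose : (k+1).choose k = k+1 := by simp [Nat.choose_symm (by omega : k ≤ k+1)]
    have hdec : PI = (1 - ((k:ℝ)+1)*((s:ℝ)-(k:ℝ)-1)*p - p*((k:ℝ)+1))
          • (1 : Matrix (lvl s (k+1)) (lvl s (k+1)) ℝ)
        + p • ((Dmat s k (k+1))ᵀ * Dmat s k (k+1)) := by
      ext S S'
      rw [hPI, Matrix.add_apply, Matrix.smul_apply, Matrix.smul_apply, UD_apply,
        Matrix.one_apply]
      simp only [smul_eq_mul]
      by_cases h : S = S'
      · subst h
        rw [if_pos rfl, if_pos rfl, Finset.inter_self, S.2, hchoose]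
        push_cast
        ring
      · rw [if_neg h, if_neg h]
        have hlt : (S.1 ∩ S'.1).card < k+1 := inter_card_lt h
        by_cases hc : (S.1 ∩ S'.1).card = k
        · rw [if_pos hc, hc, Nat.choose_self]
          simp
        · rw [if_neg hc, Nat.choose_eq_zero_of_lt (by omega)]
          simp
    have hud : x ⬝ᵥ (((Dmat s k (k+1))ᵀ * Dmat s k (k+1)) *ᵥ x)
        = (Dmat s k (k+1) *ᵥ x) ⬝ᵥ (Dmat s k (k+1) *ᵥ x) := by
      rw [← Matrix.mulVec_mulVec, Matrix.dotProduct_mulVec x, Matrix.vecMul_transpose]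
    have hdb := down_bound k (by omega) x hx
    have hxx : (0:ℝ) ≤ x ⬝ᵥ x := Finset.sum_nonneg fun i _ => mul_self_nonneg _
    rw [hdec, Matrix.add_mulVec, Matrix.smul_mulVec, Matrix.smul_mulVec,
      Matrix.one_mulVec, dotProduct_add, dotProduct_smul,
      dotProduct_smul, hud]
    simp only [smul_eq_mul]
    calc (1 - ((k:ℝ)+1)*((s:ℝ)-(k:ℝ)-1)*p - p*((k:ℝ)+1)) * (x ⬝ᵥ x)
          + p * ((Dmat s k (k+1) *ᵥ x) ⬝ᵥ (Dmat s k (k+1) *ᵥ x))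
        ≤ (1 - ((k:ℝ)+1)*((s:ℝ)-(k:ℝ)-1)*p - p*((k:ℝ)+1)) * (x ⬝ᵥ x)
          + p * ((k:ℝ) * ((s:ℝ) - ((k:ℝ)+1)) * (x ⬝ᵥ x)) := by
          have := mul_le_mul_of_nonneg_left hdb hp0
          linarith
      _ = (1 - p * s) * (x ⬝ᵥ x) := by ring
  have hcard2 : 2 ≤ Fintype.card (lvl s (k+1)) := by
    have hcard := Fintype.card_finset_len (α := Fin s) (k+1)
    rw [Fintype.card_fin] at hcard
    have h1 : (k+2).choose (k+1) = k+2 := by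
      have h2 : (k+2).choose (k+1) = (k+2).choose 1 := by
        rw [← Nat.choose_symm (by omega : k+1 ≤ k+2)]
        congr 1
        omega
      rw [h2, Nat.choose_one_right]
    calc 2 ≤ k + 2 := by omega
      _ = (k+2).choose (k+1) := h1.symm
      _ ≤ s.choose (k+1) := Nat.choose_le_choose _ hs
      _ = Fintype.card (lvl s (k+1)) := hcard.symm
  have hsec := secondEig_le PI hherm (1 - p * s) hcard2 hquad
  refine ⟨hdiag, ⟨hnonneg, hrow⟩, hsymm, ?_⟩
  have hgap : oneSidedGap PI = 1 - secondEig PI := rfl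
  rw [hgap, ge_iff_le]
  linarith
end
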